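/- (Theorem 3.7(a), Euclidean case.) Let p̄ ∈ F, let each ψ_u (u = 1,…,t) be directionally differentiable at p̄, and assume ψ_u is strictly pseudo-convex at p̄ for every active index u ∈ J(p̄). Suppose there exists an index c ∈ {1,…,l} such that the interval-valued objective φ_c, defined on the nonempty open convex set E, is weakly directionally differentiable at p̄, and either: (L-case) φ_c is strictly L-pseudo-convex at p̄ and for every p ∈ F there exist scalars μ_u ≥ 0 (possibly depending on p) with (φ_c^L)'(p̄; p − p̄) + Σ_{u=1}^t μ_u ψ_u'(p̄; p − p̄) ≥ 0 and μ_u ψ_u(p̄) = 0 for all u; or (U-case) φ_c is strictly U-pseudo-convex at p̄ and for every p ∈ F there exist scalars μ_u ≥ 0 with (φ_c^U)'(p̄; p − p̄) + Σ_{u=1}^t μ_u ψ_u'(p̄; p − p̄) ≥ 0 and μ_u ψ_u(p̄) = 0 for all u. Then p̄ is a strongly type-I Pareto optimal solution of (MIVOP2). -/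
import Mathlib


/-- One-sided directional derivative of `f` at `p` in direction `w`, with value `d`. -/
def HasDirDeriv {V : Type*} [NormedAddCommGroup V] [NormedSpace ℝ V]
    (f : V → ℝ) (p w : V) (d : ℝ) : Prop :=
  Filter.Tendsto (fun α : ℝ => (f (p + α • w) - f p) / α)
    (nhdsWithin 0 (Set.Ioi 0)) (nhds d)

/-- `f` is convex at the point `p` (relative to the convex set `E`). -/
def ConvexAtPt {V : Type*} [NormedAddCommGroup V] [NormedSpace ℝ V]
    (E : Set V) (f : V → ℝ) (p : V) : Prop :=
  ∀ q ∈ E, ∀ α : ℝ, 0 ≤ α → α ≤ 1 →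
    f ((1 - α) • p + α • q) ≤ (1 - α) * f p + α * f q

/-- `f` (with directional-derivative function `f'` at `pbar`) is pseudo-convex at `pbar`. -/
def PseudoConvexAt {V : Type*} [NormedAddCommGroup V] [NormedSpace ℝ V]
    (E : Set V) (f : V → ℝ) (f' : V → ℝ) (pbar : V) : Prop :=
  ∀ p ∈ E, f p < f pbar → f' (p - pbar) < 0

/-- `f` (with directional-derivative function `f'` at `pbar`) is strictly
pseudo-convex at `pbar`. -/
def StrictPseudoConvexAt {V : Type*} [NormedAddCommGroup V] [NormedSpace ℝ V]
    (E : Set V) (f : V → ℝ) (f' : V → ℝ) (pbar : V) : Prop :=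
  ∀ p ∈ E, p ≠ pbar → f p ≤ f pbar → f' (p - pbar) < 0

/-- `[aL, aU] ≤_LU [bL, bU]`. -/
def LUle (aL aU bL bU : ℝ) : Prop := aL ≤ bL ∧ aU ≤ bU

/-- `[aL, aU] <_LU [bL, bU]`. -/
def LUlt (aL aU bL bU : ℝ) : Prop := LUle aL aU bL bU ∧ (aL ≠ bL ∨ aU ≠ bU)

/-- `[aL, aU] ≤_CW [bL, bU]`. -/
def CWle (aL aU bL bU : ℝ) : Prop :=
  (aL + aU) / 2 ≤ (bL + bU) / 2 ∧ (aU - aL) / 2 ≤ (bU - bL) / 2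

/-- `[aL, aU] <_CW [bL, bU]`. -/
def CWlt (aL aU bL bU : ℝ) : Prop := CWle aL aU bL bU ∧ (aL ≠ bL ∨ aU ≠ bU)


private lemma kkt_aux {V : Type*} [NormedAddCommGroup V] [NormedSpace ℝ V]
    (E : Set V) (t : ℕ) (ψ : Fin t → V → ℝ) (pbar : V)
    (hpbarE : pbar ∈ E)
    (ψ' : Fin t → V → ℝ)
    (hψspc : ∀ u, ψ u pbar = 0 → StrictPseudoConvexAt E (ψ u) (ψ' u) pbar)
    (f : V → ℝ) (f' : V → ℝ)
    (hspc : StrictPseudoConvexAt E f f' pbar)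
    (hkkt : ∀ p, p ∈ E → (∀ u, ψ u p ≤ 0) →
      ∃ μ : Fin t → ℝ, (∀ u, 0 ≤ μ u) ∧
        0 ≤ f' (p - pbar) + ∑ u, μ u * ψ' u (p - pbar) ∧
        ∀ u, μ u * ψ u pbar = 0)
    (phat : V) (hE : phat ∈ E) (hF : ∀ u, ψ u phat ≤ 0)
    (hne : phat ≠ pbar) (hle : f phat ≤ f pbar) : False := by
  have hfd : f' (phat - pbar) < 0 := hspc phat hE hne hle
  obtain ⟨μ, hμ0, hsum, hcs⟩ := hkkt phat hE hF
  have hterm : ∀ u ∈ Finset.univ, μ u * ψ' u (phat - pbar) ≤ 0 := by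
    intro u _
    rcases eq_or_lt_of_le (hμ0 u) with h | h
    · simp [← h]
    · have hψ0 : ψ u pbar = 0 := by
        have := hcs u
        rcases mul_eq_zero.mp this with h1 | h2
        · exact absurd h1.symm (ne_of_lt h)
        · exact h2
      have : ψ' u (phat - pbar) < 0 := by
        refine hψspc u hψ0 phat hE hne ?_
        rw [hψ0]; exact hF u
      exact le_of_lt (mul_neg_of_pos_of_neg h this)
  have : ∑ u, μ u * ψ' u (phat - pbar) ≤ 0 := Finset.sum_nonpos hterm
  linarith

/-- Theorem 3.7(a), Euclidean case: KKT sufficiency, via a single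
strictly L-pseudo-convex (or strictly U-pseudo-convex) objective `φ_c`, for
strongly type-I Pareto optimal solutions. -/
theorem kkt_strong_type_I_L_or_U_strict_pseudoconvex
    {V : Type*} [NormedAddCommGroup V] [NormedSpace ℝ V]
    (E : Set V) (hEne : E.Nonempty) (hEopen : IsOpen E) (hEconv : Convex ℝ E)
    (l t : ℕ) (φL φU : Fin l → V → ℝ) (ψ : Fin t → V → ℝ)
    (hφint : ∀ s, ∀ x ∈ E, φL s x ≤ φU s x)
    (pbar : V) (hpbarE : pbar ∈ E) (hpbarF : ∀ u, ψ u pbar ≤ 0)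
    (ψ' : Fin t → V → ℝ)
    (hψd : ∀ u w, HasDirDeriv (ψ u) pbar w (ψ' u w))
    -- strict pseudo-convexity of the active constraints at `pbar`
    (hψspc : ∀ u, ψ u pbar = 0 → StrictPseudoConvexAt E (ψ u) (ψ' u) pbar)
    (c : Fin l)
    (φcL' φcU' : V → ℝ)
    (hφLd : ∀ w, HasDirDeriv (φL c) pbar w (φcL' w))
    (hφUd : ∀ w, HasDirDeriv (φU c) pbar w (φcU' w))
    -- L-case or U-case
    (hcase :
      (StrictPseudoConvexAt E (φL c) φcL' pbar ∧
        ∀ p, p ∈ E → (∀ u, ψ u p ≤ 0) →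
          ∃ μ : Fin t → ℝ, (∀ u, 0 ≤ μ u) ∧
            0 ≤ φcL' (p - pbar) + ∑ u, μ u * ψ' u (p - pbar) ∧
            ∀ u, μ u * ψ u pbar = 0) ∨
      (StrictPseudoConvexAt E (φU c) φcU' pbar ∧
        ∀ p, p ∈ E → (∀ u, ψ u p ≤ 0) →
          ∃ μ : Fin t → ℝ, (∀ u, 0 ≤ μ u) ∧
            0 ≤ φcU' (p - pbar) + ∑ u, μ u * ψ' u (p - pbar) ∧
            ∀ u, μ u * ψ u pbar = 0)) :
    ¬ ∃ phat, (phat ∈ E ∧ ∀ u, ψ u phat ≤ 0) ∧ phat ≠ pbar ∧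
      (∀ s, LUle (φL s phat) (φU s phat) (φL s pbar) (φU s pbar)) := by
  rintro ⟨phat, ⟨hE, hF⟩, hne, hle⟩
  rcases hcase with ⟨hspc, hkkt⟩ | ⟨hspc, hkkt⟩
  · exact kkt_aux E t ψ pbar hpbarE ψ' hψspc (φL c) φcL' hspc hkkt phat hE hF hne (hle c).1
  · exact kkt_aux E t ψ pbar hpbarE ψ' hψspc (φU c) φcU' hspc hkkt phat hE hF hne (hle c).2
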